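/- There exist four compact convex sets C₁, C₂, C₃, C₄ in ℝ² (not pairwise disjoint), ordered by index, such that with f the normalized (percent) area function on each set and α = 0.3, every three of the sets admit an (f,α)-transversal intersecting them in the order of their indices, but no line is an (f,α)-transversal of all four sets. Hence disjointness is necessary in the quantitative Hadwiger theorem. -/

import Mathlib

open MeasureTheory TopologicalSpace
open scoped Classical

noncomputable section

/-- The plane. -/
abbrev Pt : Type := ℝ × ℝ

/-- Planar cross product. -/
def pcross (v w : Pt) : ℝ := v.1 * w.2 - v.2 * w.1

/-- A directed line in the plane: a base point and a nonzero direction vector. -/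
structure DLine : Type where
  p : Pt
  v : Pt
  hv : v ≠ 0

/-- The closed half-plane to the left of a directed line. -/
def DLine.left (ℓ : DLine) : Set Pt := {q | 0 ≤ pcross ℓ.v (q - ℓ.p)}

/-- The closed half-plane to the right of a directed line. -/
def DLine.right (ℓ : DLine) : Set Pt := {q | pcross ℓ.v (q - ℓ.p) ≤ 0}

/-- The set of points of the line. -/
def DLine.line (ℓ : DLine) : Set Pt := {q | pcross ℓ.v (q - ℓ.p) = 0}

/-- Parametrization of the line along its direction. -/
def DLine.pt (ℓ : DLine) (t : ℝ) : Pt := ℓ.p + t • ℓ.v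

/-- `f` is a monotone function on convex sets. -/
def MonoConvex (f : Set Pt → ℝ) : Prop :=
  ∀ A B : Set Pt, Convex ℝ A → Convex ℝ B → A ⊆ B → f A ≤ f B

/-- `ℓ` is an `(f, α)`-stabber of `C`. -/
def Stabs (f : Set Pt → ℝ) (α : ℝ) (ℓ : DLine) (C : Set Pt) : Prop :=
  α ≤ f (ℓ.left ∩ C) ∧ α ≤ f (ℓ.right ∩ C)

/-- `ℓ` meets the sets `C 0, …, C (k-1)` in this order along its direction. -/
def MeetsInOrder (ℓ : DLine) {k : ℕ} (C : Fin k → Set Pt) : Prop :=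
  ∃ t : Fin k → ℝ, Monotone t ∧ ∀ m, ℓ.pt (t m) ∈ C m

/-- `ℓ` meets three sets in the order `A, B, C`. -/
def Meets3 (ℓ : DLine) (A B C : Set Pt) : Prop :=
  ∃ s t u : ℝ, s ≤ t ∧ t ≤ u ∧ ℓ.pt s ∈ A ∧ ℓ.pt t ∈ B ∧ ℓ.pt u ∈ C

/-- `f` is continuous with respect to the Hausdorff metric on nonempty compact sets. -/
def HausCont (f : Set Pt → ℝ) : Prop :=
  Continuous fun K : NonemptyCompacts Pt => f (K : Set Pt)

/-- The percent-area (normalized area) function of `K`. -/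
def pArea (K : Set Pt) (C : Set Pt) : ℝ :=
  (volume (C ∩ K)).toReal / (volume K).toReal

/-- `ℓ` is an `(f, α)`-stabber of `K` for the percent-area function of `K`. -/
def StabsPA (α : ℝ) (ℓ : DLine) (K : Set Pt) : Prop :=
  α ≤ pArea K (ℓ.left ∩ K) ∧ α ≤ pArea K (ℓ.right ∩ K)

/-- The reduced set `C'`: points of `C` through which the line in direction `v`
is an `(f, α)`-stabber of `C` (i.e. `C` minus the maximal pieces of `f`-value `< α`
on each side). -/
def reduceSet (f : Set Pt → ℝ) (α : ℝ) (v : Pt) (hv : v ≠ 0) (C : Set Pt) : Set Pt :=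
  {x ∈ C | Stabs f α ⟨x, v, hv⟩ C}

/-- The middle value of three reals. -/
def mid3 (a b c : ℝ) : ℝ := a + b + c - max a (max b c) - min a (min b c)

/-- The colorful `(f, α)`-separating sign of a set with respect to a directed line. -/
def signOf (f : Set Pt → ℝ) (α : ℝ) (ℓ : DLine) (C : Set Pt) : ℤ :=
  if Stabs f α ℓ C then 0 else if f (ℓ.right ∩ C) < α then -1 else 1

/-- The middle `(f, α)`-separating line of a colored family in direction `d`:
the line parallel to `d` crossing `d^⊥` at `(u₂ + v₂)/2`, where `u₂` (resp. `v₂`)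
is the middle value of the color-wise sups (resp. infs) of the endpoints of the
projections of the reduced sets onto `d^⊥`. -/
def middleLine (f : Set Pt → ℝ) (α : ℝ) (d : Pt) (hd : d ≠ 0)
    {n : ℕ} (C : Fin n → Set Pt) (color : Fin n → Fin 3) : DLine :=
  let a : Fin n → ℝ := fun i => sInf ((fun x => pcross d x) '' reduceSet f α d hd (C i))
  let b : Fin n → ℝ := fun i => sSup ((fun x => pcross d x) '' reduceSet f α d hd (C i))
  let p : Fin 3 → ℝ := fun c => sSup (a '' {i | color i = c})
  let q : Fin 3 → ℝ := fun c => sInf (b '' {i | color i = c})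
  let θ : ℝ := (mid3 (p 0) (p 1) (p 2) + mid3 (q 0) (q 1) (q 2)) / 2
  ⟨(θ / (d.1 ^ 2 + d.2 ^ 2)) • (-d.2, d.1), d, hd⟩

/-- A colored sign vector is balanced if for every two colors there is a coordinate
of one color equal to `1` and a coordinate of the other color equal to `-1`. -/
def BalancedVec {n : ℕ} (x : Fin n → ℤ) (color : Fin n → Fin 3) : Prop :=
  ∀ c₁ c₂ : Fin 3, c₁ ≠ c₂ → ∃ i j : Fin n, color i = c₁ ∧ color j = c₂ ∧
    ((x i = 1 ∧ x j = -1) ∨ (x i = -1 ∧ x j = 1))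

/-- A colored sign vector is Hadwiger if no three increasing, differently colored
coordinates form the pattern `(-1, 1, -1)` or `(1, -1, 1)`. -/
def HadwigerVec {n : ℕ} (x : Fin n → ℤ) (color : Fin n → Fin 3) : Prop :=
  ∀ i j k : Fin n, i < j → j < k →
    color i ≠ color j → color i ≠ color k → color j ≠ color k →
    ¬ ((x i = -1 ∧ x j = 1 ∧ x k = -1) ∨ (x i = 1 ∧ x j = -1 ∧ x k = 1))

/-- The axis-aligned rectangle `[0,a] × [0,b]`. -/
def rect (a b : ℝ) : Set Pt := Set.Icc (0:ℝ) a ×ˢ Set.Icc (0:ℝ) b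

/-- The two short (vertical) sides of the rectangle `[0,a] × [0,b]` (for `b < a`). -/
def shortSides (a b : ℝ) : Set Pt :=
  ({(0:ℝ)} ×ˢ Set.Icc (0:ℝ) b) ∪ ({a} ×ˢ Set.Icc (0:ℝ) b)

/-- A directed line does not intersect the short sides of the rectangle. -/
def avoidsShort (a b : ℝ) (ℓ : DLine) : Prop := ℓ.line ∩ shortSides a b = ∅

/-- Every directed line through `p` avoiding the short sides cuts the rectangle into
pieces of area fractions exactly `α` and `1 - α`. -/
def cutsExactly (a b α : ℝ) (p : Pt) : Prop :=
  ∀ ℓ : DLine, p ∈ ℓ.line → avoidsShort a b ℓ →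
    ((pArea (rect a b) (ℓ.left ∩ rect a b) = α ∧
        pArea (rect a b) (ℓ.right ∩ rect a b) = 1 - α) ∨
     (pArea (rect a b) (ℓ.left ∩ rect a b) = 1 - α ∧
        pArea (rect a b) (ℓ.right ∩ rect a b) = α))

/-! ### Auxiliary machinery for `stmt4` -/

namespace Stmt4Aux
open Set

lemma vol_box (a b c d : ℝ) (h1 : a ≤ b) (_h2 : c ≤ d) :
    volume (Icc a b ×ˢ Icc c d) = ENNReal.ofReal ((b-a)*(d-c)) := by
  rw [Measure.volume_eq_prod, Measure.prod_prod, Real.volume_Icc, Real.volume_Icc,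
    ENNReal.ofReal_mul (by linarith)]

lemma integral_affine (a b u v : ℝ) : ∫ x in a..b, (u + v*x) = u*(b-a) + v*(b^2-a^2)/2 := by
  have h1 : IntervalIntegrable (fun x : ℝ => v*x) volume a b :=
    (continuous_const.mul continuous_id').intervalIntegrable _ _
  rw [intervalIntegral.integral_add intervalIntegrable_const h1,
    intervalIntegral.integral_const, intervalIntegral.integral_const_mul, integral_id]
  simp [smul_eq_mul]; ring

lemma vol_sliceY (a b : ℝ) (hab : a ≤ b) (F G : ℝ → ℝ) (hF : Continuous F) (hG : Continuous G)
    (hFG : ∀ x ∈ Icc a b, F x ≤ G x) :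
    volume {q : Pt | q.1 ∈ Icc a b ∧ q.2 ∈ Icc (F q.1) (G q.1)} =
      ENNReal.ofReal (∫ x in a..b, (G x - F x)) := by
  have hS : MeasurableSet {q : Pt | q.1 ∈ Icc a b ∧ q.2 ∈ Icc (F q.1) (G q.1)} := by
    apply MeasurableSet.inter
    · exact (measurableSet_Icc).preimage measurable_fst
    · exact MeasurableSet.inter
        (measurableSet_le (hF.comp continuous_fst).measurable measurable_snd)
        (measurableSet_le measurable_snd (hG.comp continuous_fst).measurable)
  rw [Measure.volume_eq_prod, Measure.prod_apply hS]
  have hslice : (fun x : ℝ => volume (Prod.mk x ⁻¹' {q : Pt | q.1 ∈ Icc a b ∧ q.2 ∈ Icc (F q.1) (G q.1)}))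
      = fun x => (Icc a b).indicator (fun x => ENNReal.ofReal (G x - F x)) x := by
    funext x
    by_cases hx : x ∈ Icc a b
    · have : (Prod.mk x ⁻¹' {q : Pt | q.1 ∈ Icc a b ∧ q.2 ∈ Icc (F q.1) (G q.1)}) = Icc (F x) (G x) := by
        ext y; simp only [mem_preimage, mem_setOf_eq, mem_Icc]
        constructor
        · rintro ⟨_, h2⟩; exact h2
        · intro h2; exact ⟨by simpa [mem_Icc] using hx, h2⟩
      rw [this, Real.volume_Icc, indicator_of_mem hx]
    · have : (Prod.mk x ⁻¹' {q : Pt | q.1 ∈ Icc a b ∧ q.2 ∈ Icc (F q.1) (G q.1)}) = ∅ := by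
        ext y; simp only [mem_preimage, mem_setOf_eq, mem_empty_iff_false, iff_false, not_and]
        intro h1 _; exact hx h1
      rw [this, measure_empty, indicator_of_notMem hx]
  rw [hslice, lintegral_indicator measurableSet_Icc _,
    ← ofReal_integral_eq_lintegral_ofReal (f := fun x => G x - F x)
      ((hG.sub hF).integrableOn_Icc)
      ((ae_restrict_iff' measurableSet_Icc).2 (ae_of_all _ fun x hx => sub_nonneg.2 (hFG x hx))),
    MeasureTheory.integral_Icc_eq_integral_Ioc, ← intervalIntegral.integral_of_le hab]

lemma swap_mp : MeasurePreserving (Prod.swap : Pt → Pt) volume volume := by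
  rw [Measure.volume_eq_prod]; exact Measure.measurePreserving_swap

lemma vol_sliceX (a b : ℝ) (hab : a ≤ b) (F G : ℝ → ℝ) (hF : Continuous F) (hG : Continuous G)
    (hFG : ∀ x ∈ Icc a b, F x ≤ G x) :
    volume {q : Pt | q.2 ∈ Icc a b ∧ q.1 ∈ Icc (F q.2) (G q.2)} =
      ENNReal.ofReal (∫ x in a..b, (G x - F x)) := by
  have hS' : MeasurableSet {q : Pt | q.2 ∈ Icc a b ∧ q.1 ∈ Icc (F q.2) (G q.2)} := by
    apply MeasurableSet.inter
    · exact (measurableSet_Icc).preimage measurable_snd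
    · exact MeasurableSet.inter
        (measurableSet_le (hF.comp continuous_snd).measurable measurable_fst)
        (measurableSet_le measurable_fst (hG.comp continuous_snd).measurable)
  have hpre : Prod.swap ⁻¹' {q : Pt | q.2 ∈ Icc a b ∧ q.1 ∈ Icc (F q.2) (G q.2)}
      = {q : Pt | q.1 ∈ Icc a b ∧ q.2 ∈ Icc (F q.1) (G q.1)} := by
    ext q; simp [Prod.swap]
  calc volume {q : Pt | q.2 ∈ Icc a b ∧ q.1 ∈ Icc (F q.2) (G q.2)}
      = volume (Prod.swap ⁻¹' {q : Pt | q.2 ∈ Icc a b ∧ q.1 ∈ Icc (F q.2) (G q.2)}) :=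
        (swap_mp.measure_preimage hS'.nullMeasurableSet).symm
    _ = ENNReal.ofReal (∫ x in a..b, (G x - F x)) := by
        rw [hpre]; exact vol_sliceY a b hab F G hF hG hFG

lemma vol_sliceY_hi (a b d u v : ℝ) (hab : a ≤ b)
    (hhi : ∀ x ∈ Icc a b, u + v*x ≤ d) :
    volume {q : Pt | q.1 ∈ Icc a b ∧ q.2 ∈ Icc (u + v*q.1) d} =
      ENNReal.ofReal ((d-u)*(b-a) + (-v)*(b^2-a^2)/2) := by
  rw [vol_sliceY a b hab (fun x => u + v*x) (fun _ => d) (by fun_prop) (by fun_prop) hhi]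
  congr 1
  rw [intervalIntegral.integral_congr (g := fun x => (d-u) + (-v)*x) (fun x _ => by ring),
    integral_affine]

lemma vol_sliceY_lo (a b c u v : ℝ) (hab : a ≤ b)
    (hlo : ∀ x ∈ Icc a b, c ≤ u + v*x) :
    volume {q : Pt | q.1 ∈ Icc a b ∧ q.2 ∈ Icc c (u + v*q.1)} =
      ENNReal.ofReal ((u-c)*(b-a) + v*(b^2-a^2)/2) := by
  rw [vol_sliceY a b hab (fun _ => c) (fun x => u + v*x) (by fun_prop) (by fun_prop) hlo]
  congr 1
  rw [intervalIntegral.integral_congr (g := fun x => (u-c) + v*x) (fun x _ => by ring),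
    integral_affine]

lemma vol_sliceX_hi (a b d u v : ℝ) (hab : a ≤ b)
    (hhi : ∀ x ∈ Icc a b, u + v*x ≤ d) :
    volume {q : Pt | q.2 ∈ Icc a b ∧ q.1 ∈ Icc (u + v*q.2) d} =
      ENNReal.ofReal ((d-u)*(b-a) + (-v)*(b^2-a^2)/2) := by
  rw [vol_sliceX a b hab (fun x => u + v*x) (fun _ => d) (by fun_prop) (by fun_prop) hhi]
  congr 1
  rw [intervalIntegral.integral_congr (g := fun x => (d-u) + (-v)*x) (fun x _ => by ring),
    integral_affine]

lemma vol_sliceX_lo (a b c u v : ℝ) (hab : a ≤ b)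
    (hlo : ∀ x ∈ Icc a b, c ≤ u + v*x) :
    volume {q : Pt | q.2 ∈ Icc a b ∧ q.1 ∈ Icc c (u + v*q.2)} =
      ENNReal.ofReal ((u-c)*(b-a) + v*(b^2-a^2)/2) := by
  rw [vol_sliceX a b hab (fun _ => c) (fun x => u + v*x) (by fun_prop) (by fun_prop) hlo]
  congr 1
  rw [intervalIntegral.integral_congr (g := fun x => (u-c) + v*x) (fun x _ => by ring),
    integral_affine]

lemma val_affine (v p x y : Pt) (s t : ℝ) (hst : s + t = 1) :
    pcross v ((s • x + t • y) - p) = s * pcross v (x - p) + t * pcross v (y - p) := by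
  have h : s = 1 - t := by linarith
  subst h
  simp only [pcross, Prod.fst_add, Prod.snd_add, Prod.fst_sub, Prod.snd_sub,
    Prod.smul_fst, Prod.smul_snd, smul_eq_mul]
  ring

lemma convex_left (ℓ : DLine) : Convex ℝ ℓ.left := by
  intro x hx y hy s t hs ht hst
  simp only [DLine.left, mem_setOf_eq] at *
  rw [val_affine _ _ _ _ _ _ hst]
  have := mul_le_mul_of_nonneg_left hx hs
  have := mul_le_mul_of_nonneg_left hy ht
  nlinarith

lemma convex_right (ℓ : DLine) : Convex ℝ ℓ.right := by
  intro x hx y hy s t hs ht hst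
  simp only [DLine.right, mem_setOf_eq] at *
  rw [val_affine _ _ _ _ _ _ hst]
  have := mul_le_mul_of_nonneg_left hx hs
  have := mul_le_mul_of_nonneg_left hy ht
  nlinarith

lemma slab_bound (a b c d m : ℝ) (_hab : a ≤ b) (_hcd : c ≤ d) (_hm0 : 0 ≤ m)
    (hm2 : a + m ≤ b - m)
    (S : Set Pt) (hSconv : Convex ℝ S) (hSK : S ⊆ Icc a b ×ˢ Icc c d)
    (hSB : ∀ q ∈ S, q.1 < a + m ∨ b - m < q.1) :
    S ⊆ Icc a (a+m) ×ˢ Icc c d ∨ S ⊆ Icc (b-m) b ×ˢ Icc c d := by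
  by_cases hex : ∃ q ∈ S, b - m < q.1
  · right
    obtain ⟨q, hqS, hq1⟩ := hex
    intro q' hq'S
    have hq'K := hSK hq'S
    rcases hSB q' hq'S with h | h
    · exfalso
      have hd : 0 < q.1 - q'.1 := by linarith
      set t : ℝ := (a + m - q'.1) / (q.1 - q'.1) with ht
      have ht0 : 0 ≤ t := div_nonneg (by linarith) (by linarith)
      have ht1 : t ≤ 1 := by
        rw [div_le_one hd]; linarith
      have hz : (1 - t) • q' + t • q ∈ S := hSconv hq'S hqS (by linarith) ht0 (by ring)
      have hz1 : ((1 - t) • q' + t • q).1 = a + m := by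
        have hcoord : ((1 - t) • q' + t • q).1 = (1 - t) * q'.1 + t * q.1 := by
          simp [Prod.fst_add, Prod.smul_fst, smul_eq_mul]
        rw [hcoord, ht]
        field_simp
        ring
      rcases hSB _ hz with h' | h' <;> rw [hz1] at h' <;> linarith
    · exact ⟨⟨by linarith, (hSK hq'S).1.2⟩, (hSK hq'S).2⟩
  · left
    push_neg at hex
    intro q hqS
    rcases hSB q hqS with h | h
    · exact ⟨⟨(hSK hqS).1.1, by linarith⟩, (hSK hqS).2⟩
    · exact absurd (hex q hqS) (by linarith)

lemma side_small (a b c d m : ℝ) (hab : a < b) (hcd : c < d) (hm0 : 0 ≤ m)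
    (hm : m < (3/10) * (b - a)) (hm2 : a + m ≤ b - m)
    (S : Set Pt) (hconv : Convex ℝ S) (hsub : S ⊆ Icc a b ×ˢ Icc c d)
    (hdisj : ∀ q ∈ S, ¬ (q.1 ∈ Icc (a+m) (b-m) ∧ q.2 ∈ Icc c d))
    (hfrac : (3:ℝ)/10 ≤ (volume S).toReal / (volume (Icc a b ×ˢ Icc c d)).toReal) : False := by
  have hSB : ∀ q ∈ S, q.1 < a + m ∨ b - m < q.1 := by
    intro q hq
    have hqK := hsub hq
    have := hdisj q hq
    by_contra hcon
    push_neg at hcon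
    exact this ⟨⟨hcon.1, hcon.2⟩, hqK.2⟩
  have hvol : volume S ≤ ENNReal.ofReal (m * (d - c)) := by
    rcases slab_bound a b c d m hab.le hcd.le hm0 hm2 S hconv hsub hSB with hS | hS
    · calc volume S ≤ volume (Icc a (a+m) ×ˢ Icc c d) := measure_mono hS
        _ = ENNReal.ofReal ((a+m-a)*(d-c)) := vol_box _ _ _ _ (by linarith) hcd.le
        _ = ENNReal.ofReal (m * (d-c)) := by ring_nf
    · calc volume S ≤ volume (Icc (b-m) b ×ˢ Icc c d) := measure_mono hS
        _ = ENNReal.ofReal ((b-(b-m))*(d-c)) := vol_box _ _ _ _ (by linarith) hcd.le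
        _ = ENNReal.ofReal (m * (d-c)) := by ring_nf
  have hKvol : (volume (Icc a b ×ˢ Icc c d)).toReal = (b-a)*(d-c) := by
    rw [vol_box a b c d hab.le hcd.le, ENNReal.toReal_ofReal (by nlinarith)]
  have hnum : (volume S).toReal ≤ m * (d - c) :=
    ENNReal.toReal_le_of_le_ofReal (by nlinarith) hvol
  rw [hKvol] at hfrac
  have hKpos : 0 < (b-a)*(d-c) := by nlinarith
  rw [le_div_iff₀ hKpos] at hfrac
  nlinarith

lemma pArea_inter (K C : Set Pt) : pArea K (C ∩ K) = (volume (C ∩ K)).toReal / (volume K).toReal := by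
  rw [pArea, Set.inter_assoc, Set.inter_self]

lemma bandX (a b c d m : ℝ) (hab : a < b) (hcd : c < d) (hm0 : 0 ≤ m)
    (hm : m < (3/10) * (b - a)) (ℓ : DLine)
    (h : StabsPA 0.3 ℓ (Icc a b ×ˢ Icc c d)) :
    ∃ z : Pt, pcross ℓ.v (z - ℓ.p) = 0 ∧ z.1 ∈ Icc (a+m) (b-m) ∧ z.2 ∈ Icc c d := by
  by_contra hno
  push_neg at hno
  have hm2 : a + m ≤ b - m := by linarith
  have hBne : ∀ z : Pt, z.1 ∈ Icc (a+m) (b-m) → z.2 ∈ Icc c d →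
      pcross ℓ.v (z - ℓ.p) ≠ 0 := fun z h1 h2 h0 => (hno z h0 h1) h2
  set m₀ : Pt := ((a+b)/2, (c+d)/2) with hm₀
  have hm₀1 : m₀.1 ∈ Icc (a+m) (b-m) := by constructor <;> · simp [hm₀]; linarith
  have hm₀2 : m₀.2 ∈ Icc c d := by constructor <;> · simp [hm₀]; linarith
  have hBconv : Convex ℝ (Icc (a+m) (b-m) ×ˢ Icc c d) := (convex_Icc _ _).prod (convex_Icc _ _)
  rcases lt_trichotomy (pcross ℓ.v (m₀ - ℓ.p)) 0 with hval | hval | hval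
  · have hsign : ∀ q : Pt, q.1 ∈ Icc (a+m) (b-m) → q.2 ∈ Icc c d →
        pcross ℓ.v (q - ℓ.p) < 0 := by
      intro q h1 h2
      rcases lt_trichotomy (pcross ℓ.v (q - ℓ.p)) 0 with hq | hq | hq
      · exact hq
      · exact absurd hq (hBne q h1 h2)
      · exfalso
        set vq := pcross ℓ.v (q - ℓ.p) with hvq
        set vm := pcross ℓ.v (m₀ - ℓ.p) with hvm
        have hdpos : 0 < vq - vm := by linarith
        set t : ℝ := vq / (vq - vm) with ht
        have ht0 : 0 ≤ t := div_nonneg hq.le hdpos.le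
        have ht1 : t ≤ 1 := by rw [div_le_one hdpos]; linarith
        set z : Pt := (1 - t) • q + t • m₀ with hz
        have hzB : z ∈ Icc (a+m) (b-m) ×ˢ Icc c d :=
          hBconv ⟨h1, h2⟩ ⟨hm₀1, hm₀2⟩ (by linarith) ht0 (by ring)
        have hzval : pcross ℓ.v (z - ℓ.p) = 0 := by
          rw [hz, val_affine _ _ _ _ _ _ (by ring : (1-t) + t = 1), ← hvq, ← hvm, ht]
          field_simp
          ring
        exact hBne z hzB.1 hzB.2 hzval
    refine side_small a b c d m hab hcd hm0 hm hm2 (ℓ.left ∩ (Icc a b ×ˢ Icc c d))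
      ((convex_left ℓ).inter ((convex_Icc _ _).prod (convex_Icc _ _)))
      Set.inter_subset_right ?_ ?_
    · rintro q ⟨hqL, hqK⟩ ⟨h1, h2⟩
      exact absurd hqL (by simp only [DLine.left, mem_setOf_eq, not_le]; exact hsign q h1 h2)
    · have h1 := h.1
      rw [pArea_inter] at h1
      calc (3:ℝ)/10 = 0.3 := by norm_num
        _ ≤ _ := h1
  · exact hBne m₀ hm₀1 hm₀2 hval
  · have hsign : ∀ q : Pt, q.1 ∈ Icc (a+m) (b-m) → q.2 ∈ Icc c d →
        0 < pcross ℓ.v (q - ℓ.p) := by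
      intro q h1 h2
      rcases lt_trichotomy (pcross ℓ.v (q - ℓ.p)) 0 with hq | hq | hq
      · exfalso
        set vq := pcross ℓ.v (q - ℓ.p) with hvq
        set vm := pcross ℓ.v (m₀ - ℓ.p) with hvm
        have hdpos : 0 < vm - vq := by linarith
        set t : ℝ := vm / (vm - vq) with ht
        have ht0 : 0 ≤ t := div_nonneg hval.le hdpos.le
        have ht1 : t ≤ 1 := by rw [div_le_one hdpos]; linarith
        set z : Pt := (1 - t) • m₀ + t • q with hz
        have hzB : z ∈ Icc (a+m) (b-m) ×ˢ Icc c d :=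
          hBconv ⟨hm₀1, hm₀2⟩ ⟨h1, h2⟩ (by linarith) ht0 (by ring)
        have hzval : pcross ℓ.v (z - ℓ.p) = 0 := by
          rw [hz, val_affine _ _ _ _ _ _ (by ring : (1-t) + t = 1), ← hvq, ← hvm, ht]
          field_simp
          ring
        exact hBne z hzB.1 hzB.2 hzval
      · exact absurd hq (hBne q h1 h2)
      · exact hq
    refine side_small a b c d m hab hcd hm0 hm hm2 (ℓ.right ∩ (Icc a b ×ˢ Icc c d))
      ((convex_right ℓ).inter ((convex_Icc _ _).prod (convex_Icc _ _)))
      Set.inter_subset_right ?_ ?_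
    · rintro q ⟨hqR, hqK⟩ ⟨h1, h2⟩
      exact absurd hqR (by simp only [DLine.right, mem_setOf_eq, not_le]; exact hsign q h1 h2)
    · have h2 := h.2
      rw [pArea_inter] at h2
      calc (3:ℝ)/10 = 0.3 := by norm_num
        _ ≤ _ := h2

lemma pcross_swap_arg (v p q : Pt) :
    pcross v.swap (q - p.swap) = - pcross v (q.swap - p) := by
  simp only [pcross, Prod.swap, Prod.fst_sub, Prod.snd_sub]
  ring

def lswap (ℓ : DLine) : DLine :=
  ⟨ℓ.p.swap, ℓ.v.swap, fun h => ℓ.hv (by simpa using congrArg Prod.swap h)⟩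

lemma measurable_lineSide (ℓ : DLine) : MeasurableSet ℓ.right ∧ MeasurableSet ℓ.left := by
  have hc : Continuous (fun q : Pt => pcross ℓ.v (q - ℓ.p)) := by
    simp only [pcross, Prod.fst_sub, Prod.snd_sub]
    fun_prop
  exact ⟨measurableSet_le hc.measurable measurable_const,
    measurableSet_le measurable_const hc.measurable⟩

lemma lswap_left_inter (ℓ : DLine) (a b c d : ℝ) :
    (lswap ℓ).left ∩ (Icc c d ×ˢ Icc a b) =
      Prod.swap ⁻¹' (ℓ.right ∩ (Icc a b ×ˢ Icc c d)) := by
  ext q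
  simp only [DLine.left, DLine.right, lswap, mem_inter_iff, mem_setOf_eq, mem_preimage,
    mem_prod, pcross_swap_arg]
  constructor
  · rintro ⟨h0, h1, h2⟩; exact ⟨by linarith, ⟨h2, h1⟩⟩
  · rintro ⟨h0, h1, h2⟩; exact ⟨by linarith, h2, h1⟩

lemma lswap_right_inter (ℓ : DLine) (a b c d : ℝ) :
    (lswap ℓ).right ∩ (Icc c d ×ˢ Icc a b) =
      Prod.swap ⁻¹' (ℓ.left ∩ (Icc a b ×ˢ Icc c d)) := by
  ext q
  simp only [DLine.left, DLine.right, lswap, mem_inter_iff, mem_setOf_eq, mem_preimage,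
    mem_prod, pcross_swap_arg]
  constructor
  · rintro ⟨h0, h1, h2⟩; exact ⟨by linarith, ⟨h2, h1⟩⟩
  · rintro ⟨h0, h1, h2⟩; exact ⟨by linarith, h2, h1⟩

lemma stab_swap (a b c d : ℝ) (hab : a ≤ b) (hcd : c ≤ d) (ℓ : DLine)
    (h : StabsPA 0.3 ℓ (Icc a b ×ˢ Icc c d)) :
    StabsPA 0.3 (lswap ℓ) (Icc c d ×ˢ Icc a b) := by
  have hbox : MeasurableSet (Icc a b ×ˢ Icc c d) :=
    measurableSet_Icc.prod measurableSet_Icc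
  have hKvol : volume (Icc c d ×ˢ Icc a b) = volume (Icc a b ×ˢ Icc c d) := by
    rw [vol_box _ _ _ _ hcd hab, vol_box _ _ _ _ hab hcd]; ring_nf
  have hL : volume ((lswap ℓ).left ∩ (Icc c d ×ˢ Icc a b)) =
      volume (ℓ.right ∩ (Icc a b ×ˢ Icc c d)) := by
    rw [lswap_left_inter]
    exact swap_mp.measure_preimage
      (((measurable_lineSide ℓ).1.inter hbox).nullMeasurableSet)
  have hR : volume ((lswap ℓ).right ∩ (Icc c d ×ˢ Icc a b)) =
      volume (ℓ.left ∩ (Icc a b ×ˢ Icc c d)) := by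
    rw [lswap_right_inter]
    exact swap_mp.measure_preimage
      (((measurable_lineSide ℓ).2.inter hbox).nullMeasurableSet)
  constructor
  · rw [pArea_inter, hL, hKvol]
    have := h.2; rwa [pArea_inter] at this
  · rw [pArea_inter, hR, hKvol]
    have := h.1; rwa [pArea_inter] at this

lemma bandY (a b c d m : ℝ) (hab : a < b) (hcd : c < d) (hm0 : 0 ≤ m)
    (hm : m < (3/10) * (d - c)) (ℓ : DLine)
    (h : StabsPA 0.3 ℓ (Icc a b ×ˢ Icc c d)) :
    ∃ z : Pt, pcross ℓ.v (z - ℓ.p) = 0 ∧ z.1 ∈ Icc a b ∧ z.2 ∈ Icc (c+m) (d-m) := by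
  obtain ⟨z, hz0, hz1, hz2⟩ :=
    bandX c d a b m hcd hab hm0 hm (lswap ℓ) (stab_swap a b c d hab.le hcd.le ℓ h)
  refine ⟨z.swap, ?_, hz2, ?_⟩
  · have := hz0
    rw [show (lswap ℓ).v = ℓ.v.swap from rfl, show (lswap ℓ).p = ℓ.p.swap from rfl,
      pcross_swap_arg] at this
    linarith
  · simpa using hz1

lemma stab_of_vols (ℓ : DLine) (K : Set Pt) (VK VL VR : ℝ)
    (hVK : volume K = ENNReal.ofReal VK)
    (hVL : volume (ℓ.left ∩ K) = ENNReal.ofReal VL)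
    (hVR : volume (ℓ.right ∩ K) = ENNReal.ofReal VR)
    (h0 : 0 < VK) (hL0 : 0 ≤ VL) (hR0 : 0 ≤ VR)
    (hL : 3/10 * VK ≤ VL) (hR : 3/10 * VK ≤ VR) : StabsPA 0.3 ℓ K := by
  constructor
  · rw [pArea_inter, hVL, hVK, ENNReal.toReal_ofReal hL0, ENNReal.toReal_ofReal h0.le,
      show (0.3:ℝ) = 3/10 by norm_num, le_div_iff₀ h0]
    linarith
  · rw [pArea_inter, hVR, hVK, ENNReal.toReal_ofReal hR0, ENNReal.toReal_ofReal h0.le,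
      show (0.3:ℝ) = 3/10 by norm_num, le_div_iff₀ h0]
    linarith

lemma pcross_sub (v x y : Pt) : pcross v x - pcross v y = pcross v (x - y) := by
  simp only [pcross, Prod.fst_sub, Prod.snd_sub]; ring

lemma pcross_parallel (v w w' : Pt) (hv : v ≠ 0)
    (h1 : pcross v w = 0) (h2 : pcross v w' = 0) : pcross w w' = 0 := by
  simp only [pcross] at h1 h2 ⊢
  have hv' : v.1 ≠ 0 ∨ v.2 ≠ 0 := by
    by_contra hc
    push_neg at hc
    exact hv (Prod.ext hc.1 hc.2)
  rcases hv' with hv1 | hv2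
  · have : v.1 * (w.1 * w'.2 - w.2 * w'.1) = 0 := by linear_combination w.1 * h2 - w'.1 * h1
    exact (mul_eq_zero.mp this).resolve_left hv1
  · have : v.2 * (w.1 * w'.2 - w.2 * w'.1) = 0 := by linear_combination w.2 * h2 - w'.2 * h1
    exact (mul_eq_zero.mp this).resolve_left hv2

end Stmt4Aux

namespace Stmt4Aux
open Set

def H1 : Set Pt := Icc (-30:ℝ) (70:ℝ) ×ˢ Icc (19/5:ℝ) (4:ℝ)
def V3 : Set Pt := Icc (-1/10:ℝ) (1/10:ℝ) ×ˢ Icc (-10:ℝ) (10:ℝ)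
def H2 : Set Pt := Icc (-30:ℝ) (70:ℝ) ×ˢ Icc (-4:ℝ) (-19/5:ℝ)
def V4 : Set Pt := Icc (399/10:ℝ) (401/10:ℝ) ×ˢ Icc (-15/2:ℝ) (15/2:ℝ)

def LA : DLine := ⟨((0:ℝ), (0:ℝ)), ((0:ℝ), (-1:ℝ)), by norm_num [Prod.ext_iff]⟩
def LB : DLine := ⟨((40:ℝ), (0:ℝ)), ((0:ℝ), (-1:ℝ)), by norm_num [Prod.ext_iff]⟩
def LC : DLine := ⟨((0:ℝ), (4:ℝ)), ((40:ℝ), (-1:ℝ)), by norm_num [Prod.ext_iff]⟩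
def LD : DLine := ⟨((0:ℝ), (-4:ℝ)), ((40:ℝ), (1:ℝ)), by norm_num [Prod.ext_iff]⟩

lemma vol_H1 : volume H1 = ENNReal.ofReal 20 := by
  rw [H1, vol_box _ _ _ _ (by norm_num) (by norm_num)]
  norm_num

lemma vol_V3 : volume V3 = ENNReal.ofReal 4 := by
  rw [V3, vol_box _ _ _ _ (by norm_num) (by norm_num)]
  norm_num

lemma vol_H2 : volume H2 = ENNReal.ofReal 20 := by
  rw [H2, vol_box _ _ _ _ (by norm_num) (by norm_num)]
  norm_num

lemma vol_V4 : volume V4 = ENNReal.ofReal 3 := by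
  rw [V4, vol_box _ _ _ _ (by norm_num) (by norm_num)]
  norm_num

lemma vol_LA_H1_L : volume (LA.left ∩ H1) = ENNReal.ofReal (14) := by
  have hset : LA.left ∩ H1 = {q : Pt | q.2 ∈ Icc (19/5:ℝ) (4:ℝ) ∧ q.1 ∈ Icc ((0:ℝ) + (0:ℝ)*q.2) (70:ℝ)} := by
    ext q
    simp only [DLine.left, DLine.right, LA, pcross, H1, mem_inter_iff, mem_setOf_eq,
      mem_prod, mem_Icc, Prod.fst_sub, Prod.snd_sub]
    constructor
    · rintro ⟨h0, ⟨h1, h2⟩, h3, h4⟩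
      exact ⟨⟨by linarith, by linarith⟩, by linarith, by linarith⟩
    · rintro ⟨⟨h1, h2⟩, h3, h4⟩
      exact ⟨by linarith, ⟨by linarith, by linarith⟩, by linarith, by linarith⟩
  rw [hset, vol_sliceX_hi (19/5:ℝ) (4:ℝ) (70:ℝ) (0:ℝ) (0:ℝ) (by norm_num)
    (fun x hx => by simp only [Set.mem_Icc] at hx; nlinarith [hx.1, hx.2])]
  congr 1
  norm_num

lemma vol_LA_H1_R : volume (LA.right ∩ H1) = ENNReal.ofReal (6) := by
  have hset : LA.right ∩ H1 = {q : Pt | q.2 ∈ Icc (19/5:ℝ) (4:ℝ) ∧ q.1 ∈ Icc (-30:ℝ) ((0:ℝ) + (0:ℝ)*q.2)} := by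
    ext q
    simp only [DLine.left, DLine.right, LA, pcross, H1, mem_inter_iff, mem_setOf_eq,
      mem_prod, mem_Icc, Prod.fst_sub, Prod.snd_sub]
    constructor
    · rintro ⟨h0, ⟨h1, h2⟩, h3, h4⟩
      exact ⟨⟨by linarith, by linarith⟩, by linarith, by linarith⟩
    · rintro ⟨⟨h1, h2⟩, h3, h4⟩
      exact ⟨by linarith, ⟨by linarith, by linarith⟩, by linarith, by linarith⟩
  rw [hset, vol_sliceX_lo (19/5:ℝ) (4:ℝ) (-30:ℝ) (0:ℝ) (0:ℝ) (by norm_num)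
    (fun x hx => by simp only [Set.mem_Icc] at hx; nlinarith [hx.1, hx.2])]
  congr 1
  norm_num

lemma vol_LA_V3_L : volume (LA.left ∩ V3) = ENNReal.ofReal (2) := by
  have hset : LA.left ∩ V3 = {q : Pt | q.2 ∈ Icc (-10:ℝ) (10:ℝ) ∧ q.1 ∈ Icc ((0:ℝ) + (0:ℝ)*q.2) (1/10:ℝ)} := by
    ext q
    simp only [DLine.left, DLine.right, LA, pcross, V3, mem_inter_iff, mem_setOf_eq,
      mem_prod, mem_Icc, Prod.fst_sub, Prod.snd_sub]
    constructor
    · rintro ⟨h0, ⟨h1, h2⟩, h3, h4⟩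
      exact ⟨⟨by linarith, by linarith⟩, by linarith, by linarith⟩
    · rintro ⟨⟨h1, h2⟩, h3, h4⟩
      exact ⟨by linarith, ⟨by linarith, by linarith⟩, by linarith, by linarith⟩
  rw [hset, vol_sliceX_hi (-10:ℝ) (10:ℝ) (1/10:ℝ) (0:ℝ) (0:ℝ) (by norm_num)
    (fun x hx => by simp only [Set.mem_Icc] at hx; nlinarith [hx.1, hx.2])]
  congr 1
  norm_num

lemma vol_LA_V3_R : volume (LA.right ∩ V3) = ENNReal.ofReal (2) := by
  have hset : LA.right ∩ V3 = {q : Pt | q.2 ∈ Icc (-10:ℝ) (10:ℝ) ∧ q.1 ∈ Icc (-1/10:ℝ) ((0:ℝ) + (0:ℝ)*q.2)} := by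
    ext q
    simp only [DLine.left, DLine.right, LA, pcross, V3, mem_inter_iff, mem_setOf_eq,
      mem_prod, mem_Icc, Prod.fst_sub, Prod.snd_sub]
    constructor
    · rintro ⟨h0, ⟨h1, h2⟩, h3, h4⟩
      exact ⟨⟨by linarith, by linarith⟩, by linarith, by linarith⟩
    · rintro ⟨⟨h1, h2⟩, h3, h4⟩
      exact ⟨by linarith, ⟨by linarith, by linarith⟩, by linarith, by linarith⟩
  rw [hset, vol_sliceX_lo (-10:ℝ) (10:ℝ) (-1/10:ℝ) (0:ℝ) (0:ℝ) (by norm_num)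
    (fun x hx => by simp only [Set.mem_Icc] at hx; nlinarith [hx.1, hx.2])]
  congr 1
  norm_num

lemma vol_LA_H2_L : volume (LA.left ∩ H2) = ENNReal.ofReal (14) := by
  have hset : LA.left ∩ H2 = {q : Pt | q.2 ∈ Icc (-4:ℝ) (-19/5:ℝ) ∧ q.1 ∈ Icc ((0:ℝ) + (0:ℝ)*q.2) (70:ℝ)} := by
    ext q
    simp only [DLine.left, DLine.right, LA, pcross, H2, mem_inter_iff, mem_setOf_eq,
      mem_prod, mem_Icc, Prod.fst_sub, Prod.snd_sub]
    constructor
    · rintro ⟨h0, ⟨h1, h2⟩, h3, h4⟩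
      exact ⟨⟨by linarith, by linarith⟩, by linarith, by linarith⟩
    · rintro ⟨⟨h1, h2⟩, h3, h4⟩
      exact ⟨by linarith, ⟨by linarith, by linarith⟩, by linarith, by linarith⟩
  rw [hset, vol_sliceX_hi (-4:ℝ) (-19/5:ℝ) (70:ℝ) (0:ℝ) (0:ℝ) (by norm_num)
    (fun x hx => by simp only [Set.mem_Icc] at hx; nlinarith [hx.1, hx.2])]
  congr 1
  norm_num

lemma vol_LA_H2_R : volume (LA.right ∩ H2) = ENNReal.ofReal (6) := by
  have hset : LA.right ∩ H2 = {q : Pt | q.2 ∈ Icc (-4:ℝ) (-19/5:ℝ) ∧ q.1 ∈ Icc (-30:ℝ) ((0:ℝ) + (0:ℝ)*q.2)} := by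
    ext q
    simp only [DLine.left, DLine.right, LA, pcross, H2, mem_inter_iff, mem_setOf_eq,
      mem_prod, mem_Icc, Prod.fst_sub, Prod.snd_sub]
    constructor
    · rintro ⟨h0, ⟨h1, h2⟩, h3, h4⟩
      exact ⟨⟨by linarith, by linarith⟩, by linarith, by linarith⟩
    · rintro ⟨⟨h1, h2⟩, h3, h4⟩
      exact ⟨by linarith, ⟨by linarith, by linarith⟩, by linarith, by linarith⟩
  rw [hset, vol_sliceX_lo (-4:ℝ) (-19/5:ℝ) (-30:ℝ) (0:ℝ) (0:ℝ) (by norm_num)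
    (fun x hx => by simp only [Set.mem_Icc] at hx; nlinarith [hx.1, hx.2])]
  congr 1
  norm_num

lemma vol_LB_H1_L : volume (LB.left ∩ H1) = ENNReal.ofReal (6) := by
  have hset : LB.left ∩ H1 = {q : Pt | q.2 ∈ Icc (19/5:ℝ) (4:ℝ) ∧ q.1 ∈ Icc ((40:ℝ) + (0:ℝ)*q.2) (70:ℝ)} := by
    ext q
    simp only [DLine.left, DLine.right, LB, pcross, H1, mem_inter_iff, mem_setOf_eq,
      mem_prod, mem_Icc, Prod.fst_sub, Prod.snd_sub]
    constructor
    · rintro ⟨h0, ⟨h1, h2⟩, h3, h4⟩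
      exact ⟨⟨by linarith, by linarith⟩, by linarith, by linarith⟩
    · rintro ⟨⟨h1, h2⟩, h3, h4⟩
      exact ⟨by linarith, ⟨by linarith, by linarith⟩, by linarith, by linarith⟩
  rw [hset, vol_sliceX_hi (19/5:ℝ) (4:ℝ) (70:ℝ) (40:ℝ) (0:ℝ) (by norm_num)
    (fun x hx => by simp only [Set.mem_Icc] at hx; nlinarith [hx.1, hx.2])]
  congr 1
  norm_num

lemma vol_LB_H1_R : volume (LB.right ∩ H1) = ENNReal.ofReal (14) := by
  have hset : LB.right ∩ H1 = {q : Pt | q.2 ∈ Icc (19/5:ℝ) (4:ℝ) ∧ q.1 ∈ Icc (-30:ℝ) ((40:ℝ) + (0:ℝ)*q.2)} := by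
    ext q
    simp only [DLine.left, DLine.right, LB, pcross, H1, mem_inter_iff, mem_setOf_eq,
      mem_prod, mem_Icc, Prod.fst_sub, Prod.snd_sub]
    constructor
    · rintro ⟨h0, ⟨h1, h2⟩, h3, h4⟩
      exact ⟨⟨by linarith, by linarith⟩, by linarith, by linarith⟩
    · rintro ⟨⟨h1, h2⟩, h3, h4⟩
      exact ⟨by linarith, ⟨by linarith, by linarith⟩, by linarith, by linarith⟩
  rw [hset, vol_sliceX_lo (19/5:ℝ) (4:ℝ) (-30:ℝ) (40:ℝ) (0:ℝ) (by norm_num)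
    (fun x hx => by simp only [Set.mem_Icc] at hx; nlinarith [hx.1, hx.2])]
  congr 1
  norm_num

lemma vol_LB_H2_L : volume (LB.left ∩ H2) = ENNReal.ofReal (6) := by
  have hset : LB.left ∩ H2 = {q : Pt | q.2 ∈ Icc (-4:ℝ) (-19/5:ℝ) ∧ q.1 ∈ Icc ((40:ℝ) + (0:ℝ)*q.2) (70:ℝ)} := by
    ext q
    simp only [DLine.left, DLine.right, LB, pcross, H2, mem_inter_iff, mem_setOf_eq,
      mem_prod, mem_Icc, Prod.fst_sub, Prod.snd_sub]
    constructor
    · rintro ⟨h0, ⟨h1, h2⟩, h3, h4⟩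
      exact ⟨⟨by linarith, by linarith⟩, by linarith, by linarith⟩
    · rintro ⟨⟨h1, h2⟩, h3, h4⟩
      exact ⟨by linarith, ⟨by linarith, by linarith⟩, by linarith, by linarith⟩
  rw [hset, vol_sliceX_hi (-4:ℝ) (-19/5:ℝ) (70:ℝ) (40:ℝ) (0:ℝ) (by norm_num)
    (fun x hx => by simp only [Set.mem_Icc] at hx; nlinarith [hx.1, hx.2])]
  congr 1
  norm_num

lemma vol_LB_H2_R : volume (LB.right ∩ H2) = ENNReal.ofReal (14) := by
  have hset : LB.right ∩ H2 = {q : Pt | q.2 ∈ Icc (-4:ℝ) (-19/5:ℝ) ∧ q.1 ∈ Icc (-30:ℝ) ((40:ℝ) + (0:ℝ)*q.2)} := by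
    ext q
    simp only [DLine.left, DLine.right, LB, pcross, H2, mem_inter_iff, mem_setOf_eq,
      mem_prod, mem_Icc, Prod.fst_sub, Prod.snd_sub]
    constructor
    · rintro ⟨h0, ⟨h1, h2⟩, h3, h4⟩
      exact ⟨⟨by linarith, by linarith⟩, by linarith, by linarith⟩
    · rintro ⟨⟨h1, h2⟩, h3, h4⟩
      exact ⟨by linarith, ⟨by linarith, by linarith⟩, by linarith, by linarith⟩
  rw [hset, vol_sliceX_lo (-4:ℝ) (-19/5:ℝ) (-30:ℝ) (40:ℝ) (0:ℝ) (by norm_num)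
    (fun x hx => by simp only [Set.mem_Icc] at hx; nlinarith [hx.1, hx.2])]
  congr 1
  norm_num

lemma vol_LB_V4_L : volume (LB.left ∩ V4) = ENNReal.ofReal (3/2) := by
  have hset : LB.left ∩ V4 = {q : Pt | q.2 ∈ Icc (-15/2:ℝ) (15/2:ℝ) ∧ q.1 ∈ Icc ((40:ℝ) + (0:ℝ)*q.2) (401/10:ℝ)} := by
    ext q
    simp only [DLine.left, DLine.right, LB, pcross, V4, mem_inter_iff, mem_setOf_eq,
      mem_prod, mem_Icc, Prod.fst_sub, Prod.snd_sub]
    constructor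
    · rintro ⟨h0, ⟨h1, h2⟩, h3, h4⟩
      exact ⟨⟨by linarith, by linarith⟩, by linarith, by linarith⟩
    · rintro ⟨⟨h1, h2⟩, h3, h4⟩
      exact ⟨by linarith, ⟨by linarith, by linarith⟩, by linarith, by linarith⟩
  rw [hset, vol_sliceX_hi (-15/2:ℝ) (15/2:ℝ) (401/10:ℝ) (40:ℝ) (0:ℝ) (by norm_num)
    (fun x hx => by simp only [Set.mem_Icc] at hx; nlinarith [hx.1, hx.2])]
  congr 1
  norm_num

lemma vol_LB_V4_R : volume (LB.right ∩ V4) = ENNReal.ofReal (3/2) := by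
  have hset : LB.right ∩ V4 = {q : Pt | q.2 ∈ Icc (-15/2:ℝ) (15/2:ℝ) ∧ q.1 ∈ Icc (399/10:ℝ) ((40:ℝ) + (0:ℝ)*q.2)} := by
    ext q
    simp only [DLine.left, DLine.right, LB, pcross, V4, mem_inter_iff, mem_setOf_eq,
      mem_prod, mem_Icc, Prod.fst_sub, Prod.snd_sub]
    constructor
    · rintro ⟨h0, ⟨h1, h2⟩, h3, h4⟩
      exact ⟨⟨by linarith, by linarith⟩, by linarith, by linarith⟩
    · rintro ⟨⟨h1, h2⟩, h3, h4⟩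
      exact ⟨by linarith, ⟨by linarith, by linarith⟩, by linarith, by linarith⟩
  rw [hset, vol_sliceX_lo (-15/2:ℝ) (15/2:ℝ) (399/10:ℝ) (40:ℝ) (0:ℝ) (by norm_num)
    (fun x hx => by simp only [Set.mem_Icc] at hx; nlinarith [hx.1, hx.2])]
  congr 1
  norm_num

lemma vol_LC_H1_L : volume (LC.left ∩ H1) = ENNReal.ofReal (66/5) := by
  have hset : LC.left ∩ H1 = {q : Pt | q.2 ∈ Icc (19/5:ℝ) (4:ℝ) ∧ q.1 ∈ Icc ((160:ℝ) + (-40:ℝ)*q.2) (70:ℝ)} := by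
    ext q
    simp only [DLine.left, DLine.right, LC, pcross, H1, mem_inter_iff, mem_setOf_eq,
      mem_prod, mem_Icc, Prod.fst_sub, Prod.snd_sub]
    constructor
    · rintro ⟨h0, ⟨h1, h2⟩, h3, h4⟩
      exact ⟨⟨by linarith, by linarith⟩, by linarith, by linarith⟩
    · rintro ⟨⟨h1, h2⟩, h3, h4⟩
      exact ⟨by linarith, ⟨by linarith, by linarith⟩, by linarith, by linarith⟩
  rw [hset, vol_sliceX_hi (19/5:ℝ) (4:ℝ) (70:ℝ) (160:ℝ) (-40:ℝ) (by norm_num)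
    (fun x hx => by simp only [Set.mem_Icc] at hx; nlinarith [hx.1, hx.2])]
  congr 1
  norm_num

lemma vol_LC_H1_R : volume (LC.right ∩ H1) = ENNReal.ofReal (34/5) := by
  have hset : LC.right ∩ H1 = {q : Pt | q.2 ∈ Icc (19/5:ℝ) (4:ℝ) ∧ q.1 ∈ Icc (-30:ℝ) ((160:ℝ) + (-40:ℝ)*q.2)} := by
    ext q
    simp only [DLine.left, DLine.right, LC, pcross, H1, mem_inter_iff, mem_setOf_eq,
      mem_prod, mem_Icc, Prod.fst_sub, Prod.snd_sub]
    constructor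
    · rintro ⟨h0, ⟨h1, h2⟩, h3, h4⟩
      exact ⟨⟨by linarith, by linarith⟩, by linarith, by linarith⟩
    · rintro ⟨⟨h1, h2⟩, h3, h4⟩
      exact ⟨by linarith, ⟨by linarith, by linarith⟩, by linarith, by linarith⟩
  rw [hset, vol_sliceX_lo (19/5:ℝ) (4:ℝ) (-30:ℝ) (160:ℝ) (-40:ℝ) (by norm_num)
    (fun x hx => by simp only [Set.mem_Icc] at hx; nlinarith [hx.1, hx.2])]
  congr 1
  norm_num

lemma vol_LC_V3_L : volume (LC.left ∩ V3) = ENNReal.ofReal (6/5) := by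
  have hset : LC.left ∩ V3 = {q : Pt | q.1 ∈ Icc (-1/10:ℝ) (1/10:ℝ) ∧ q.2 ∈ Icc ((4:ℝ) + (-1/40:ℝ)*q.1) (10:ℝ)} := by
    ext q
    simp only [DLine.left, DLine.right, LC, pcross, V3, mem_inter_iff, mem_setOf_eq,
      mem_prod, mem_Icc, Prod.fst_sub, Prod.snd_sub]
    constructor
    · rintro ⟨h0, ⟨h1, h2⟩, h3, h4⟩
      exact ⟨⟨by linarith, by linarith⟩, by linarith, by linarith⟩
    · rintro ⟨⟨h1, h2⟩, h3, h4⟩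
      exact ⟨by linarith, ⟨by linarith, by linarith⟩, by linarith, by linarith⟩
  rw [hset, vol_sliceY_hi (-1/10:ℝ) (1/10:ℝ) (10:ℝ) (4:ℝ) (-1/40:ℝ) (by norm_num)
    (fun x hx => by simp only [Set.mem_Icc] at hx; nlinarith [hx.1, hx.2])]
  congr 1
  norm_num

lemma vol_LC_V3_R : volume (LC.right ∩ V3) = ENNReal.ofReal (14/5) := by
  have hset : LC.right ∩ V3 = {q : Pt | q.1 ∈ Icc (-1/10:ℝ) (1/10:ℝ) ∧ q.2 ∈ Icc (-10:ℝ) ((4:ℝ) + (-1/40:ℝ)*q.1)} := by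
    ext q
    simp only [DLine.left, DLine.right, LC, pcross, V3, mem_inter_iff, mem_setOf_eq,
      mem_prod, mem_Icc, Prod.fst_sub, Prod.snd_sub]
    constructor
    · rintro ⟨h0, ⟨h1, h2⟩, h3, h4⟩
      exact ⟨⟨by linarith, by linarith⟩, by linarith, by linarith⟩
    · rintro ⟨⟨h1, h2⟩, h3, h4⟩
      exact ⟨by linarith, ⟨by linarith, by linarith⟩, by linarith, by linarith⟩
  rw [hset, vol_sliceY_lo (-1/10:ℝ) (1/10:ℝ) (-10:ℝ) (4:ℝ) (-1/40:ℝ) (by norm_num)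
    (fun x hx => by simp only [Set.mem_Icc] at hx; nlinarith [hx.1, hx.2])]
  congr 1
  norm_num

lemma vol_LC_V4_L : volume (LC.left ∩ V4) = ENNReal.ofReal (9/10) := by
  have hset : LC.left ∩ V4 = {q : Pt | q.1 ∈ Icc (399/10:ℝ) (401/10:ℝ) ∧ q.2 ∈ Icc ((4:ℝ) + (-1/40:ℝ)*q.1) (15/2:ℝ)} := by
    ext q
    simp only [DLine.left, DLine.right, LC, pcross, V4, mem_inter_iff, mem_setOf_eq,
      mem_prod, mem_Icc, Prod.fst_sub, Prod.snd_sub]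
    constructor
    · rintro ⟨h0, ⟨h1, h2⟩, h3, h4⟩
      exact ⟨⟨by linarith, by linarith⟩, by linarith, by linarith⟩
    · rintro ⟨⟨h1, h2⟩, h3, h4⟩
      exact ⟨by linarith, ⟨by linarith, by linarith⟩, by linarith, by linarith⟩
  rw [hset, vol_sliceY_hi (399/10:ℝ) (401/10:ℝ) (15/2:ℝ) (4:ℝ) (-1/40:ℝ) (by norm_num)
    (fun x hx => by simp only [Set.mem_Icc] at hx; nlinarith [hx.1, hx.2])]
  congr 1
  norm_num

lemma vol_LC_V4_R : volume (LC.right ∩ V4) = ENNReal.ofReal (21/10) := by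
  have hset : LC.right ∩ V4 = {q : Pt | q.1 ∈ Icc (399/10:ℝ) (401/10:ℝ) ∧ q.2 ∈ Icc (-15/2:ℝ) ((4:ℝ) + (-1/40:ℝ)*q.1)} := by
    ext q
    simp only [DLine.left, DLine.right, LC, pcross, V4, mem_inter_iff, mem_setOf_eq,
      mem_prod, mem_Icc, Prod.fst_sub, Prod.snd_sub]
    constructor
    · rintro ⟨h0, ⟨h1, h2⟩, h3, h4⟩
      exact ⟨⟨by linarith, by linarith⟩, by linarith, by linarith⟩
    · rintro ⟨⟨h1, h2⟩, h3, h4⟩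
      exact ⟨by linarith, ⟨by linarith, by linarith⟩, by linarith, by linarith⟩
  rw [hset, vol_sliceY_lo (399/10:ℝ) (401/10:ℝ) (-15/2:ℝ) (4:ℝ) (-1/40:ℝ) (by norm_num)
    (fun x hx => by simp only [Set.mem_Icc] at hx; nlinarith [hx.1, hx.2])]
  congr 1
  norm_num

lemma vol_LD_V3_L : volume (LD.left ∩ V3) = ENNReal.ofReal (14/5) := by
  have hset : LD.left ∩ V3 = {q : Pt | q.1 ∈ Icc (-1/10:ℝ) (1/10:ℝ) ∧ q.2 ∈ Icc ((-4:ℝ) + (1/40:ℝ)*q.1) (10:ℝ)} := by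
    ext q
    simp only [DLine.left, DLine.right, LD, pcross, V3, mem_inter_iff, mem_setOf_eq,
      mem_prod, mem_Icc, Prod.fst_sub, Prod.snd_sub]
    constructor
    · rintro ⟨h0, ⟨h1, h2⟩, h3, h4⟩
      exact ⟨⟨by linarith, by linarith⟩, by linarith, by linarith⟩
    · rintro ⟨⟨h1, h2⟩, h3, h4⟩
      exact ⟨by linarith, ⟨by linarith, by linarith⟩, by linarith, by linarith⟩
  rw [hset, vol_sliceY_hi (-1/10:ℝ) (1/10:ℝ) (10:ℝ) (-4:ℝ) (1/40:ℝ) (by norm_num)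
    (fun x hx => by simp only [Set.mem_Icc] at hx; nlinarith [hx.1, hx.2])]
  congr 1
  norm_num

lemma vol_LD_V3_R : volume (LD.right ∩ V3) = ENNReal.ofReal (6/5) := by
  have hset : LD.right ∩ V3 = {q : Pt | q.1 ∈ Icc (-1/10:ℝ) (1/10:ℝ) ∧ q.2 ∈ Icc (-10:ℝ) ((-4:ℝ) + (1/40:ℝ)*q.1)} := by
    ext q
    simp only [DLine.left, DLine.right, LD, pcross, V3, mem_inter_iff, mem_setOf_eq,
      mem_prod, mem_Icc, Prod.fst_sub, Prod.snd_sub]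
    constructor
    · rintro ⟨h0, ⟨h1, h2⟩, h3, h4⟩
      exact ⟨⟨by linarith, by linarith⟩, by linarith, by linarith⟩
    · rintro ⟨⟨h1, h2⟩, h3, h4⟩
      exact ⟨by linarith, ⟨by linarith, by linarith⟩, by linarith, by linarith⟩
  rw [hset, vol_sliceY_lo (-1/10:ℝ) (1/10:ℝ) (-10:ℝ) (-4:ℝ) (1/40:ℝ) (by norm_num)
    (fun x hx => by simp only [Set.mem_Icc] at hx; nlinarith [hx.1, hx.2])]
  congr 1
  norm_num

lemma vol_LD_H2_L : volume (LD.left ∩ H2) = ENNReal.ofReal (34/5) := by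
  have hset : LD.left ∩ H2 = {q : Pt | q.2 ∈ Icc (-4:ℝ) (-19/5:ℝ) ∧ q.1 ∈ Icc (-30:ℝ) ((160:ℝ) + (40:ℝ)*q.2)} := by
    ext q
    simp only [DLine.left, DLine.right, LD, pcross, H2, mem_inter_iff, mem_setOf_eq,
      mem_prod, mem_Icc, Prod.fst_sub, Prod.snd_sub]
    constructor
    · rintro ⟨h0, ⟨h1, h2⟩, h3, h4⟩
      exact ⟨⟨by linarith, by linarith⟩, by linarith, by linarith⟩
    · rintro ⟨⟨h1, h2⟩, h3, h4⟩
      exact ⟨by linarith, ⟨by linarith, by linarith⟩, by linarith, by linarith⟩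
  rw [hset, vol_sliceX_lo (-4:ℝ) (-19/5:ℝ) (-30:ℝ) (160:ℝ) (40:ℝ) (by norm_num)
    (fun x hx => by simp only [Set.mem_Icc] at hx; nlinarith [hx.1, hx.2])]
  congr 1
  norm_num

lemma vol_LD_H2_R : volume (LD.right ∩ H2) = ENNReal.ofReal (66/5) := by
  have hset : LD.right ∩ H2 = {q : Pt | q.2 ∈ Icc (-4:ℝ) (-19/5:ℝ) ∧ q.1 ∈ Icc ((160:ℝ) + (40:ℝ)*q.2) (70:ℝ)} := by
    ext q
    simp only [DLine.left, DLine.right, LD, pcross, H2, mem_inter_iff, mem_setOf_eq,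
      mem_prod, mem_Icc, Prod.fst_sub, Prod.snd_sub]
    constructor
    · rintro ⟨h0, ⟨h1, h2⟩, h3, h4⟩
      exact ⟨⟨by linarith, by linarith⟩, by linarith, by linarith⟩
    · rintro ⟨⟨h1, h2⟩, h3, h4⟩
      exact ⟨by linarith, ⟨by linarith, by linarith⟩, by linarith, by linarith⟩
  rw [hset, vol_sliceX_hi (-4:ℝ) (-19/5:ℝ) (70:ℝ) (160:ℝ) (40:ℝ) (by norm_num)
    (fun x hx => by simp only [Set.mem_Icc] at hx; nlinarith [hx.1, hx.2])]
  congr 1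
  norm_num

lemma vol_LD_V4_L : volume (LD.left ∩ V4) = ENNReal.ofReal (21/10) := by
  have hset : LD.left ∩ V4 = {q : Pt | q.1 ∈ Icc (399/10:ℝ) (401/10:ℝ) ∧ q.2 ∈ Icc ((-4:ℝ) + (1/40:ℝ)*q.1) (15/2:ℝ)} := by
    ext q
    simp only [DLine.left, DLine.right, LD, pcross, V4, mem_inter_iff, mem_setOf_eq,
      mem_prod, mem_Icc, Prod.fst_sub, Prod.snd_sub]
    constructor
    · rintro ⟨h0, ⟨h1, h2⟩, h3, h4⟩
      exact ⟨⟨by linarith, by linarith⟩, by linarith, by linarith⟩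
    · rintro ⟨⟨h1, h2⟩, h3, h4⟩
      exact ⟨by linarith, ⟨by linarith, by linarith⟩, by linarith, by linarith⟩
  rw [hset, vol_sliceY_hi (399/10:ℝ) (401/10:ℝ) (15/2:ℝ) (-4:ℝ) (1/40:ℝ) (by norm_num)
    (fun x hx => by simp only [Set.mem_Icc] at hx; nlinarith [hx.1, hx.2])]
  congr 1
  norm_num

lemma vol_LD_V4_R : volume (LD.right ∩ V4) = ENNReal.ofReal (9/10) := by
  have hset : LD.right ∩ V4 = {q : Pt | q.1 ∈ Icc (399/10:ℝ) (401/10:ℝ) ∧ q.2 ∈ Icc (-15/2:ℝ) ((-4:ℝ) + (1/40:ℝ)*q.1)} := by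
    ext q
    simp only [DLine.left, DLine.right, LD, pcross, V4, mem_inter_iff, mem_setOf_eq,
      mem_prod, mem_Icc, Prod.fst_sub, Prod.snd_sub]
    constructor
    · rintro ⟨h0, ⟨h1, h2⟩, h3, h4⟩
      exact ⟨⟨by linarith, by linarith⟩, by linarith, by linarith⟩
    · rintro ⟨⟨h1, h2⟩, h3, h4⟩
      exact ⟨by linarith, ⟨by linarith, by linarith⟩, by linarith, by linarith⟩
  rw [hset, vol_sliceY_lo (399/10:ℝ) (401/10:ℝ) (-15/2:ℝ) (-4:ℝ) (1/40:ℝ) (by norm_num)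
    (fun x hx => by simp only [Set.mem_Icc] at hx; nlinarith [hx.1, hx.2])]
  congr 1
  norm_num

lemma stab_LA_H1 : StabsPA 0.3 LA H1 :=
  stab_of_vols LA H1 20 (14) (6) vol_H1 vol_LA_H1_L vol_LA_H1_R
    (by norm_num) (by norm_num) (by norm_num) (by norm_num) (by norm_num)

lemma stab_LA_V3 : StabsPA 0.3 LA V3 :=
  stab_of_vols LA V3 4 (2) (2) vol_V3 vol_LA_V3_L vol_LA_V3_R
    (by norm_num) (by norm_num) (by norm_num) (by norm_num) (by norm_num)

lemma stab_LA_H2 : StabsPA 0.3 LA H2 :=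
  stab_of_vols LA H2 20 (14) (6) vol_H2 vol_LA_H2_L vol_LA_H2_R
    (by norm_num) (by norm_num) (by norm_num) (by norm_num) (by norm_num)

lemma stab_LB_H1 : StabsPA 0.3 LB H1 :=
  stab_of_vols LB H1 20 (6) (14) vol_H1 vol_LB_H1_L vol_LB_H1_R
    (by norm_num) (by norm_num) (by norm_num) (by norm_num) (by norm_num)

lemma stab_LB_H2 : StabsPA 0.3 LB H2 :=
  stab_of_vols LB H2 20 (6) (14) vol_H2 vol_LB_H2_L vol_LB_H2_R
    (by norm_num) (by norm_num) (by norm_num) (by norm_num) (by norm_num)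

lemma stab_LB_V4 : StabsPA 0.3 LB V4 :=
  stab_of_vols LB V4 3 (3/2) (3/2) vol_V4 vol_LB_V4_L vol_LB_V4_R
    (by norm_num) (by norm_num) (by norm_num) (by norm_num) (by norm_num)

lemma stab_LC_H1 : StabsPA 0.3 LC H1 :=
  stab_of_vols LC H1 20 (66/5) (34/5) vol_H1 vol_LC_H1_L vol_LC_H1_R
    (by norm_num) (by norm_num) (by norm_num) (by norm_num) (by norm_num)

lemma stab_LC_V3 : StabsPA 0.3 LC V3 :=
  stab_of_vols LC V3 4 (6/5) (14/5) vol_V3 vol_LC_V3_L vol_LC_V3_R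
    (by norm_num) (by norm_num) (by norm_num) (by norm_num) (by norm_num)

lemma stab_LC_V4 : StabsPA 0.3 LC V4 :=
  stab_of_vols LC V4 3 (9/10) (21/10) vol_V4 vol_LC_V4_L vol_LC_V4_R
    (by norm_num) (by norm_num) (by norm_num) (by norm_num) (by norm_num)

lemma stab_LD_V3 : StabsPA 0.3 LD V3 :=
  stab_of_vols LD V3 4 (14/5) (6/5) vol_V3 vol_LD_V3_L vol_LD_V3_R
    (by norm_num) (by norm_num) (by norm_num) (by norm_num) (by norm_num)

lemma stab_LD_H2 : StabsPA 0.3 LD H2 :=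
  stab_of_vols LD H2 20 (34/5) (66/5) vol_H2 vol_LD_H2_L vol_LD_H2_R
    (by norm_num) (by norm_num) (by norm_num) (by norm_num) (by norm_num)

lemma stab_LD_V4 : StabsPA 0.3 LD V4 :=
  stab_of_vols LD V4 3 (21/10) (9/10) vol_V4 vol_LD_V4_L vol_LD_V4_R
    (by norm_num) (by norm_num) (by norm_num) (by norm_num) (by norm_num)

lemma mem_LA_H1 : DLine.pt LA (-19/5) ∈ H1 := by
  refine ⟨?_, ?_⟩ <;>
    simp only [DLine.pt, LA, H1, Prod.fst_add, Prod.snd_add, Prod.smul_fst, Prod.smul_snd,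
      smul_eq_mul, Set.mem_Icc] <;>
    norm_num

lemma mem_LA_V3 : DLine.pt LA (0) ∈ V3 := by
  refine ⟨?_, ?_⟩ <;>
    simp only [DLine.pt, LA, V3, Prod.fst_add, Prod.snd_add, Prod.smul_fst, Prod.smul_snd,
      smul_eq_mul, Set.mem_Icc] <;>
    norm_num

lemma mem_LA_H2 : DLine.pt LA (19/5) ∈ H2 := by
  refine ⟨?_, ?_⟩ <;>
    simp only [DLine.pt, LA, H2, Prod.fst_add, Prod.snd_add, Prod.smul_fst, Prod.smul_snd,
      smul_eq_mul, Set.mem_Icc] <;>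
    norm_num

lemma mem_LB_H1 : DLine.pt LB (-19/5) ∈ H1 := by
  refine ⟨?_, ?_⟩ <;>
    simp only [DLine.pt, LB, H1, Prod.fst_add, Prod.snd_add, Prod.smul_fst, Prod.smul_snd,
      smul_eq_mul, Set.mem_Icc] <;>
    norm_num

lemma mem_LB_H2 : DLine.pt LB (19/5) ∈ H2 := by
  refine ⟨?_, ?_⟩ <;>
    simp only [DLine.pt, LB, H2, Prod.fst_add, Prod.snd_add, Prod.smul_fst, Prod.smul_snd,
      smul_eq_mul, Set.mem_Icc] <;>
    norm_num

lemma mem_LB_V4 : DLine.pt LB (7) ∈ V4 := by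
  refine ⟨?_, ?_⟩ <;>
    simp only [DLine.pt, LB, V4, Prod.fst_add, Prod.snd_add, Prod.smul_fst, Prod.smul_snd,
      smul_eq_mul, Set.mem_Icc] <;>
    norm_num

lemma mem_LC_H1 : DLine.pt LC (0) ∈ H1 := by
  refine ⟨?_, ?_⟩ <;>
    simp only [DLine.pt, LC, H1, Prod.fst_add, Prod.snd_add, Prod.smul_fst, Prod.smul_snd,
      smul_eq_mul, Set.mem_Icc] <;>
    norm_num

lemma mem_LC_V3 : DLine.pt LC (0) ∈ V3 := by
  refine ⟨?_, ?_⟩ <;>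
    simp only [DLine.pt, LC, V3, Prod.fst_add, Prod.snd_add, Prod.smul_fst, Prod.smul_snd,
      smul_eq_mul, Set.mem_Icc] <;>
    norm_num

lemma mem_LC_V4 : DLine.pt LC (1) ∈ V4 := by
  refine ⟨?_, ?_⟩ <;>
    simp only [DLine.pt, LC, V4, Prod.fst_add, Prod.snd_add, Prod.smul_fst, Prod.smul_snd,
      smul_eq_mul, Set.mem_Icc] <;>
    norm_num

lemma mem_LD_V3 : DLine.pt LD (0) ∈ V3 := by
  refine ⟨?_, ?_⟩ <;>
    simp only [DLine.pt, LD, V3, Prod.fst_add, Prod.snd_add, Prod.smul_fst, Prod.smul_snd,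
      smul_eq_mul, Set.mem_Icc] <;>
    norm_num

lemma mem_LD_H2 : DLine.pt LD (0) ∈ H2 := by
  refine ⟨?_, ?_⟩ <;>
    simp only [DLine.pt, LD, H2, Prod.fst_add, Prod.snd_add, Prod.smul_fst, Prod.smul_snd,
      smul_eq_mul, Set.mem_Icc] <;>
    norm_num

lemma mem_LD_V4 : DLine.pt LD (1) ∈ V4 := by
  refine ⟨?_, ?_⟩ <;>
    simp only [DLine.pt, LD, V4, Prod.fst_add, Prod.snd_add, Prod.smul_fst, Prod.smul_snd,
      smul_eq_mul, Set.mem_Icc] <;>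
    norm_num

end Stmt4Aux
/-- disjointness is necessary in the quantitative Hadwiger theorem:
four overlapping compact convex sets, percent-area functions and `α = 0.3`, such that
every three admit an in-order `(f,α)`-transversal but no common one exists. -/
theorem stmt4 :
    ∃ C : Fin 4 → Set Pt,
      (∀ i, IsCompact (C i)) ∧ (∀ i, Convex ℝ (C i)) ∧ (∀ i, 0 < volume (C i)) ∧
      ¬ Pairwise (Function.onFun Disjoint C) ∧
      (∀ i j k : Fin 4, i < j → j < k →
        ∃ ℓ : DLine, StabsPA 0.3 ℓ (C i) ∧ StabsPA 0.3 ℓ (C j) ∧ StabsPA 0.3 ℓ (C k) ∧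
          Meets3 ℓ (C i) (C j) (C k)) ∧
      ¬ ∃ ℓ : DLine, ∀ i, StabsPA 0.3 ℓ (C i) := by
  classical
  refine ⟨![Stmt4Aux.H1, Stmt4Aux.V3, Stmt4Aux.H2, Stmt4Aux.V4], ?_, ?_, ?_, ?_, ?_, ?_⟩
  · intro i
    fin_cases i
    · exact (isCompact_Icc.prod isCompact_Icc : IsCompact Stmt4Aux.H1)
    · exact (isCompact_Icc.prod isCompact_Icc : IsCompact Stmt4Aux.V3)
    · exact (isCompact_Icc.prod isCompact_Icc : IsCompact Stmt4Aux.H2)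
    · exact (isCompact_Icc.prod isCompact_Icc : IsCompact Stmt4Aux.V4)
  · intro i
    fin_cases i
    · exact ((convex_Icc _ _).prod (convex_Icc _ _) : Convex ℝ Stmt4Aux.H1)
    · exact ((convex_Icc _ _).prod (convex_Icc _ _) : Convex ℝ Stmt4Aux.V3)
    · exact ((convex_Icc _ _).prod (convex_Icc _ _) : Convex ℝ Stmt4Aux.H2)
    · exact ((convex_Icc _ _).prod (convex_Icc _ _) : Convex ℝ Stmt4Aux.V4)
  · intro i
    fin_cases i
    · show (0 : ENNReal) < volume Stmt4Aux.H1
      rw [Stmt4Aux.vol_H1]; exact ENNReal.ofReal_pos.mpr (by norm_num)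
    · show (0 : ENNReal) < volume Stmt4Aux.V3
      rw [Stmt4Aux.vol_V3]; exact ENNReal.ofReal_pos.mpr (by norm_num)
    · show (0 : ENNReal) < volume Stmt4Aux.H2
      rw [Stmt4Aux.vol_H2]; exact ENNReal.ofReal_pos.mpr (by norm_num)
    · show (0 : ENNReal) < volume Stmt4Aux.V4
      rw [Stmt4Aux.vol_V4]; exact ENNReal.ofReal_pos.mpr (by norm_num)
  · intro hp
    have hd : Disjoint Stmt4Aux.H1 Stmt4Aux.V3 := hp (show (0 : Fin 4) ≠ 1 by decide)
    have hmem1 : ((0:ℝ), (19/5:ℝ)) ∈ Stmt4Aux.H1 := by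
      refine ⟨?_, ?_⟩ <;> simp only [Stmt4Aux.H1, Set.mem_Icc] <;> norm_num
    have hmem2 : ((0:ℝ), (19/5:ℝ)) ∈ Stmt4Aux.V3 := by
      refine ⟨?_, ?_⟩ <;> simp only [Stmt4Aux.V3, Set.mem_Icc] <;> norm_num
    exact (Set.disjoint_left.mp hd hmem1) hmem2
  · intro i j k hij hjk
    fin_cases i <;> fin_cases j <;> fin_cases k <;>
      first
      | exact absurd hij (by decide)
      | exact absurd hjk (by decide)
      | exact ⟨Stmt4Aux.LA, Stmt4Aux.stab_LA_H1, Stmt4Aux.stab_LA_V3, Stmt4Aux.stab_LA_H2,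
          -19/5, 0, 19/5, by norm_num, by norm_num,
          Stmt4Aux.mem_LA_H1, Stmt4Aux.mem_LA_V3, Stmt4Aux.mem_LA_H2⟩
      | exact ⟨Stmt4Aux.LC, Stmt4Aux.stab_LC_H1, Stmt4Aux.stab_LC_V3, Stmt4Aux.stab_LC_V4,
          0, 0, 1, by norm_num, by norm_num,
          Stmt4Aux.mem_LC_H1, Stmt4Aux.mem_LC_V3, Stmt4Aux.mem_LC_V4⟩
      | exact ⟨Stmt4Aux.LB, Stmt4Aux.stab_LB_H1, Stmt4Aux.stab_LB_H2, Stmt4Aux.stab_LB_V4,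
          -19/5, 19/5, 7, by norm_num, by norm_num,
          Stmt4Aux.mem_LB_H1, Stmt4Aux.mem_LB_H2, Stmt4Aux.mem_LB_V4⟩
      | exact ⟨Stmt4Aux.LD, Stmt4Aux.stab_LD_V3, Stmt4Aux.stab_LD_H2, Stmt4Aux.stab_LD_V4,
          0, 0, 1, by norm_num, by norm_num,
          Stmt4Aux.mem_LD_V3, Stmt4Aux.mem_LD_H2, Stmt4Aux.mem_LD_V4⟩
  · rintro ⟨ℓ, hall⟩
    obtain ⟨z1, hz1l, hz1x, hz1y⟩ :=
      Stmt4Aux.bandX (-30) 70 (19/5) 4 (59/2) (by norm_num) (by norm_num) (by norm_num)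
        (by norm_num) ℓ (hall 0)
    obtain ⟨z2, hz2l, hz2x, hz2y⟩ :=
      Stmt4Aux.bandX (-30) 70 (-4) (-19/5) (59/2) (by norm_num) (by norm_num) (by norm_num)
        (by norm_num) ℓ (hall 2)
    obtain ⟨z3, hz3l, hz3x, hz3y⟩ :=
      Stmt4Aux.bandY (-1/10) (1/10) (-10) 10 (59/10) (by norm_num) (by norm_num) (by norm_num)
        (by norm_num) ℓ (hall 1)
    obtain ⟨z4, hz4l, hz4x, hz4y⟩ :=
      Stmt4Aux.bandY (399/10) (401/10) (-15/2) (15/2) (177/40) (by norm_num) (by norm_num)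
        (by norm_num) (by norm_num) ℓ (hall 3)
    have e1 : pcross ℓ.v (z1 - z2) = 0 := by
      have h := Stmt4Aux.pcross_sub ℓ.v (z1 - ℓ.p) (z2 - ℓ.p)
      rw [sub_sub_sub_cancel_right] at h
      rw [← h, hz1l, hz2l, sub_zero]
    have e2 : pcross ℓ.v (z4 - z3) = 0 := by
      have h := Stmt4Aux.pcross_sub ℓ.v (z4 - ℓ.p) (z3 - ℓ.p)
      rw [sub_sub_sub_cancel_right] at h
      rw [← h, hz4l, hz3l, sub_zero]
    have hpar := Stmt4Aux.pcross_parallel ℓ.v (z1 - z2) (z4 - z3) ℓ.hv e1 e2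
    simp only [pcross, Prod.fst_sub, Prod.snd_sub] at hpar
    rw [Set.mem_Icc] at hz1x hz1y hz2x hz2y hz3x hz3y hz4x hz4y
    have hC : (38/5 : ℝ) ≤ z1.2 - z2.2 := by
      have a1 := hz1y.1; have a2 := hz2y.2; norm_num at a1 a2 ⊢; linarith
    have hD : (199/5 : ℝ) ≤ z4.1 - z3.1 := by
      have a1 := hz4x.1; have a2 := hz3x.2; norm_num at a1 a2 ⊢; linarith
    have hCD : (38/5 : ℝ) * (199/5) ≤ (z1.2 - z2.2) * (z4.1 - z3.1) :=
      mul_le_mul hC hD (by norm_num) (by linarith)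
    have hA : |z1.1 - z2.1| ≤ 41 := by
      rw [abs_le]
      have a1 := hz1x.1; have a2 := hz1x.2; have a3 := hz2x.1; have a4 := hz2x.2
      norm_num at a1 a2 a3 a4 ⊢
      constructor <;> linarith
    have hB : |z4.2 - z3.2| ≤ 287/40 := by
      rw [abs_le]
      have a1 := hz4y.1; have a2 := hz4y.2; have a3 := hz3y.1; have a4 := hz3y.2
      norm_num at a1 a2 a3 a4 ⊢
      constructor <;> linarith
    have hAB : (z1.1 - z2.1) * (z4.2 - z3.2) ≤ 41 * (287/40) := by
      calc (z1.1 - z2.1) * (z4.2 - z3.2) ≤ |(z1.1 - z2.1) * (z4.2 - z3.2)| := le_abs_self _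
        _ = |z1.1 - z2.1| * |z4.2 - z3.2| := abs_mul _ _
        _ ≤ 41 * (287/40) := mul_le_mul hA hB (abs_nonneg _) (by norm_num)
    linarith [hpar, hCD, hAB]
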